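/- For all rationals r₁, r₂ and every natural number N, the product of partial exponential sums satisfies (∑_{i=0}^{N} r₁^i/i!)·(∑_{j=0}^{N} r₂^j/j!) = ∑_{k=0}^{N} (r₁+r₂)^k/k! + U, where |U| ≤ ∑_{k=N+1}^{2N} (|r₁|+|r₂|)^k/k!. -/

import Mathlib

open Finset

lemma antidiag_sum (x y : ℚ) (k : ℕ) :
    ∑ p ∈ Finset.HasAntidiagonal.antidiagonal k, x ^ p.1 / (Nat.factorial p.1 : ℚ) * (y ^ p.2 / (Nat.factorial p.2 : ℚ))
      = (x + y) ^ k / (Nat.factorial k : ℚ) := by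
  rw [Finset.Nat.sum_antidiagonal_eq_sum_range_succ_mk, add_pow, Finset.sum_div]
  refine Finset.sum_congr rfl fun i hi => ?_
  have hik : i ≤ k := Nat.lt_succ_iff.mp (Finset.mem_range.mp hi)
  have h1 : (Nat.factorial i : ℚ) ≠ 0 := Nat.cast_ne_zero.mpr (Nat.factorial_ne_zero i)
  have h2 : (Nat.factorial (k - i) : ℚ) ≠ 0 := Nat.cast_ne_zero.mpr (Nat.factorial_ne_zero _)
  have h3 : (Nat.factorial k : ℚ) ≠ 0 := Nat.cast_ne_zero.mpr (Nat.factorial_ne_zero k)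
  rw [Nat.cast_choose ℚ hik]
  field_simp

theorem exp_partial_sum_mul (r₁ r₂ : ℚ) (N : ℕ) :
    ∃ U : ℚ,
      (∑ i ∈ Finset.range (N + 1), r₁ ^ i / (Nat.factorial i : ℚ)) *
          (∑ j ∈ Finset.range (N + 1), r₂ ^ j / (Nat.factorial j : ℚ))
        = (∑ k ∈ Finset.range (N + 1), (r₁ + r₂) ^ k / (Nat.factorial k : ℚ)) + U ∧
      |U| ≤ ∑ k ∈ Finset.Icc (N + 1) (2 * N), (|r₁| + |r₂|) ^ k / (Nat.factorial k : ℚ) := by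
  classical
  set S := Finset.range (N + 1) ×ˢ Finset.range (N + 1) with hS
  set f : ℕ × ℕ → ℚ := fun p => r₁ ^ p.1 / (Nat.factorial p.1 : ℚ) * (r₂ ^ p.2 / (Nat.factorial p.2 : ℚ)) with hf
  set B := S.filter (fun p => ¬ p.1 + p.2 ≤ N) with hB
  refine ⟨∑ p ∈ B, f p, ?_, ?_⟩
  · rw [Finset.sum_mul_sum, ← Finset.sum_product']
    have hsplit : ∑ p ∈ S, f p =
        (∑ p ∈ S.filter (fun p => p.1 + p.2 ≤ N), f p) + ∑ p ∈ B, f p :=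
      (Finset.sum_filter_add_sum_filter_not S _ f).symm
    have hA : ∑ p ∈ S.filter (fun p => p.1 + p.2 ≤ N), f p
        = ∑ k ∈ Finset.range (N + 1), (r₁ + r₂) ^ k / (Nat.factorial k : ℚ) := by
      have hmaps : ∀ p ∈ S.filter (fun p => p.1 + p.2 ≤ N), p.1 + p.2 ∈ Finset.range (N + 1) := by
        intro p hp
        simp only [Finset.mem_filter] at hp
        simp [Nat.lt_succ_iff, hp.2]
      rw [← Finset.sum_fiberwise_of_maps_to hmaps f]
      refine Finset.sum_congr rfl fun k hk => ?_
      have hk' : k ≤ N := Nat.lt_succ_iff.mp (Finset.mem_range.mp hk)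
      have hset : (S.filter (fun p => p.1 + p.2 ≤ N)).filter (fun p => p.1 + p.2 = k)
          = Finset.HasAntidiagonal.antidiagonal k := by
        ext p
        simp only [Finset.mem_filter, Finset.mem_product, Finset.mem_range,
          Finset.HasAntidiagonal.mem_antidiagonal, hS]
        omega
      rw [hset, antidiag_sum]
    rw [hsplit, hA]
  · calc |∑ p ∈ B, f p| ≤ ∑ p ∈ B, |f p| := Finset.abs_sum_le_sum_abs _ _
      _ = ∑ p ∈ B, |r₁| ^ p.1 / (Nat.factorial p.1 : ℚ) * (|r₂| ^ p.2 / (Nat.factorial p.2 : ℚ)) := by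
          refine Finset.sum_congr rfl fun p hp => ?_
          simp [hf, abs_mul, abs_div, abs_pow, Nat.abs_cast]
      _ ≤ ∑ k ∈ Finset.Icc (N + 1) (2 * N), (|r₁| + |r₂|) ^ k / (Nat.factorial k : ℚ) := by
          set g : ℕ × ℕ → ℚ := fun p => |r₁| ^ p.1 / (Nat.factorial p.1 : ℚ) * (|r₂| ^ p.2 / (Nat.factorial p.2 : ℚ)) with hg
          have hmaps : ∀ p ∈ B, p.1 + p.2 ∈ Finset.Icc (N + 1) (2 * N) := by
            intro p hp
            simp only [hB, Finset.mem_filter, hS, Finset.mem_product, Finset.mem_range] at hp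
            simp only [Finset.mem_Icc]
            omega
          rw [← Finset.sum_fiberwise_of_maps_to hmaps g]
          refine Finset.sum_le_sum fun k hk => ?_
          have hsub : B.filter (fun p => p.1 + p.2 = k) ⊆ Finset.HasAntidiagonal.antidiagonal k := by
            intro p hp
            simp only [Finset.mem_filter] at hp
            simp [Finset.HasAntidiagonal.mem_antidiagonal, hp.2]
          calc ∑ p ∈ B.filter (fun p => p.1 + p.2 = k), g p
              ≤ ∑ p ∈ Finset.HasAntidiagonal.antidiagonal k, g p := by
                refine Finset.sum_le_sum_of_subset_of_nonneg hsub fun p _ _ => ?_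
                have h1 : (0:ℚ) ≤ |r₁| ^ p.1 / (Nat.factorial p.1 : ℚ) :=
                  div_nonneg (pow_nonneg (abs_nonneg _) _) (Nat.cast_nonneg _)
                have h2 : (0:ℚ) ≤ |r₂| ^ p.2 / (Nat.factorial p.2 : ℚ) :=
                  div_nonneg (pow_nonneg (abs_nonneg _) _) (Nat.cast_nonneg _)
                exact mul_nonneg h1 h2
            _ = (|r₁| + |r₂|) ^ k / (Nat.factorial k : ℚ) := antidiag_sum _ _ k
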